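/- Let d be a pseudometric on a type α, let Σ¹,…,Σ^C (C ≥ 1) be nonempty finite subsets of α with positive weights λ₁,…,λ_C, let λ* = max_k λ_k and M = {k : λ_k = λ*}. Fix any ρ ∈ α and set W = max_k λ_k·d_med(ρ, Σ^k). Then there exist k ∈ M and σ ∈ Σ^k such that max_j λ_j·d_med(σ, Σ^j) ≤ 2W. -/

import Mathlib

/-- The median distance between a point `π` and a finite set `T` of points:
`(1/|T|) · ∑_{σ ∈ T} d(π, σ)`. -/
noncomputable def medDist {α : Type*} (d : α → α → ℝ) (π : α) (T : Finset α) : ℝ :=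
  (1 / (T.card : ℝ)) * ∑ σ ∈ T, d π σ

/-- There is a ranking in one of the maximal-weight classes whose minmax
median-distance objective is at most `2W`. -/
theorem exists_pick_perm_le_two_W {α : Type*} (d : α → α → ℝ)
    (hd_self : ∀ x, d x x = 0)
    (hd_symm : ∀ x y, d x y = d y x)
    (hd_nonneg : ∀ x y, 0 ≤ d x y)
    (hd_tri : ∀ x y z, d x z ≤ d x y + d y z)
    {C : ℕ} (hC : 0 < C)
    (S : Fin C → Finset α) (hS : ∀ k, (S k).Nonempty)
    (lam : Fin C → ℝ) (hlam : ∀ k, 0 < lam k)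
    (lamStar : ℝ)
    (hlamStar : lamStar = Finset.univ.sup' ⟨⟨0, hC⟩, Finset.mem_univ _⟩ lam)
    (M : Finset (Fin C)) (hM : M = Finset.univ.filter (fun k => lam k = lamStar))
    (ρ : α) (W : ℝ)
    (hW : W = Finset.univ.sup' ⟨⟨0, hC⟩, Finset.mem_univ _⟩
      (fun k => lam k * medDist d ρ (S k))) :
    ∃ k ∈ M, ∃ σ ∈ S k,
      Finset.univ.sup' ⟨⟨0, hC⟩, Finset.mem_univ _⟩
        (fun j => lam j * medDist d σ (S j)) ≤ 2 * W := by
  -- pick k attaining the max weight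
  obtain ⟨k, -, hk⟩ := Finset.exists_mem_eq_sup' (⟨⟨0, hC⟩, Finset.mem_univ _⟩ :
    (Finset.univ : Finset (Fin C)).Nonempty) lam
  have hkM : k ∈ M := by
    rw [hM]; simp [hk, hlamStar]
  -- facts about medDist nonnegativity
  have hmed_nonneg : ∀ (π : α) (j : Fin C), 0 ≤ medDist d π (S j) := by
    intro π j
    unfold medDist
    apply mul_nonneg (by positivity)
    exact Finset.sum_nonneg fun _ _ => hd_nonneg _ _
  -- pick σ ∈ S k with d ρ σ ≤ medDist d ρ (S k)
  have hcard : (0 : ℝ) < ((S k).card : ℝ) := by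
    exact_mod_cast Finset.card_pos.mpr (hS k)
  have hsum : ∑ σ ∈ S k, d ρ σ ≤ ∑ _σ ∈ S k, medDist d ρ (S k) := by
    rw [Finset.sum_const, nsmul_eq_mul]
    unfold medDist
    rw [← mul_assoc, mul_one_div, div_self (ne_of_gt hcard), one_mul]
  obtain ⟨σ, hσ, hσle⟩ := Finset.exists_le_of_sum_le (hS k) hsum
  refine ⟨k, hkM, σ, hσ, ?_⟩
  have hlamStar_nonneg : 0 ≤ lamStar := by rw [hlamStar, hk]; exact (hlam k).le
  have hWk : lam k * medDist d ρ (S k) ≤ W := by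
    rw [hW]; exact Finset.le_sup' (fun k => lam k * medDist d ρ (S k)) (Finset.mem_univ k)
  apply Finset.sup'_le
  intro j _
  -- medDist d σ (S j) ≤ d σ ρ + medDist d ρ (S j)
  have htri : medDist d σ (S j) ≤ d σ ρ + medDist d ρ (S j) := by
    have hcj : (0 : ℝ) < ((S j).card : ℝ) := by
      exact_mod_cast Finset.card_pos.mpr (hS j)
    unfold medDist
    have h1 : ∑ τ ∈ S j, d σ τ ≤ ∑ τ ∈ S j, (d σ ρ + d ρ τ) :=
      Finset.sum_le_sum fun τ _ => hd_tri σ ρ τ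
    rw [Finset.sum_add_distrib, Finset.sum_const, nsmul_eq_mul] at h1
    calc (1 / ((S j).card : ℝ)) * ∑ τ ∈ S j, d σ τ
        ≤ (1 / ((S j).card : ℝ)) * (((S j).card : ℝ) * d σ ρ + ∑ τ ∈ S j, d ρ τ) := by
          apply mul_le_mul_of_nonneg_left h1 (by positivity)
      _ = d σ ρ + (1 / ((S j).card : ℝ)) * ∑ τ ∈ S j, d ρ τ := by
          field_simp
  have hj1 : lam j * medDist d σ (S j) ≤ lam j * d σ ρ + lam j * medDist d ρ (S j) := by
    rw [← mul_add]
    exact mul_le_mul_of_nonneg_left htri (hlam j).le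
  have hj2 : lam j * d σ ρ ≤ W := by
    have hlamj : lam j ≤ lamStar := by
      rw [hlamStar]; exact Finset.le_sup' lam (Finset.mem_univ j)
    calc lam j * d σ ρ ≤ lamStar * d σ ρ :=
          mul_le_mul_of_nonneg_right hlamj (hd_nonneg _ _)
      _ = lam k * d ρ σ := by rw [hlamStar, hk, hd_symm]
      _ ≤ lam k * medDist d ρ (S k) := mul_le_mul_of_nonneg_left hσle (hlam k).le
      _ ≤ W := hWk
  have hj3 : lam j * medDist d ρ (S j) ≤ W := by
    rw [hW]; exact Finset.le_sup' (fun k => lam k * medDist d ρ (S k)) (Finset.mem_univ j)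
  linarith
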